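/- arXiv:1605.07292 — 2 statements merged into one kernel-verified Lean document; each statement's English description precedes it below -/
import Mathlib

section
/- Let k ≥ 1 and set n = 2k+1. For every natural number q, the coefficient of t^q in the formal power series (1 - t^{2k+2}) · (1 - t^2)⁻¹ · (1 - t^{2k})⁻¹ ∈ ℚ⟦t⟧ equals: 2 if q is a positive multiple of n - 1 = 2k; 1 if q is even and q is not a positive multiple of 2k; and 0 if q is odd. -/
open PowerSeries

private noncomputable def geomG (m : ℕ) : ℚ⟦X⟧ :=
  PowerSeries.mk fun n => if m ∣ n then 1 else 0

private lemma coeff_geomG (m n : ℕ) :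
    PowerSeries.coeff (R := ℚ) n (geomG m) = if m ∣ n then 1 else 0 := by
  simp [geomG]

private lemma one_sub_mul_geomG (m : ℕ) (hm : 1 ≤ m) :
    (1 - (X : ℚ⟦X⟧) ^ m) * geomG m = 1 := by
  ext n
  rw [sub_mul, one_mul, map_sub, PowerSeries.coeff_X_pow_mul', coeff_geomG]
  rcases Nat.eq_zero_or_pos n with rfl | hn
  · simp [show ¬ m ≤ 0 by omega]
  · have hone : (PowerSeries.coeff (R := ℚ) n) (1 : ℚ⟦X⟧) = 0 := by
      simp [PowerSeries.coeff_one, hn.ne']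
    rw [hone]
    by_cases h : m ∣ n
    · have hmn : m ≤ n := Nat.le_of_dvd hn h
      have hd : m ∣ n - m := Nat.dvd_sub h dvd_rfl
      simp [h, hmn, coeff_geomG, hd]
    · by_cases hmn : m ≤ n
      · have hnd : ¬ m ∣ n - m := fun hd => h (by
          have := Nat.dvd_add hd (dvd_refl m)
          rwa [Nat.sub_add_cancel hmn] at this)
        simp [h, hmn, coeff_geomG, hnd]
      · simp [h, hmn]

private lemma const_one_sub_pow (m : ℕ) (hm : 1 ≤ m) :
    PowerSeries.constantCoeff (R := ℚ) (1 - (X : ℚ⟦X⟧) ^ m) ≠ 0 := by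
  rw [map_sub, map_one, map_pow, PowerSeries.constantCoeff_X,
    zero_pow (by omega), sub_zero]
  norm_num

private lemma inv_one_sub_pow (m : ℕ) (hm : 1 ≤ m) :
    (1 - (X : ℚ⟦X⟧) ^ m)⁻¹ = geomG m := by
  rw [PowerSeries.inv_eq_iff_mul_eq_one (const_one_sub_pow m hm), mul_comm,
    one_sub_mul_geomG m hm]

theorem betti_numbers_odd (k : ℕ) (hk : 1 ≤ k) (q : ℕ) :
    ((0 < q ∧ 2 * k ∣ q) →
      (PowerSeries.coeff (R := ℚ) q)
        ((1 - (X : ℚ⟦X⟧) ^ (2 * k + 2)) * (1 - (X : ℚ⟦X⟧) ^ 2)⁻¹ *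
          (1 - (X : ℚ⟦X⟧) ^ (2 * k))⁻¹) = 2) ∧
    ((Even q ∧ ¬(0 < q ∧ 2 * k ∣ q)) →
      (PowerSeries.coeff (R := ℚ) q)
        ((1 - (X : ℚ⟦X⟧) ^ (2 * k + 2)) * (1 - (X : ℚ⟦X⟧) ^ 2)⁻¹ *
          (1 - (X : ℚ⟦X⟧) ^ (2 * k))⁻¹) = 1) ∧
    (Odd q →
      (PowerSeries.coeff (R := ℚ) q)
        ((1 - (X : ℚ⟦X⟧) ^ (2 * k + 2)) * (1 - (X : ℚ⟦X⟧) ^ 2)⁻¹ *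
          (1 - (X : ℚ⟦X⟧) ^ (2 * k))⁻¹) = 0) := by
  have h2k : 1 ≤ 2 * k := by omega
  have key : (1 - (X : ℚ⟦X⟧) ^ (2 * k + 2)) * (1 - (X : ℚ⟦X⟧) ^ 2)⁻¹ *
      (1 - (X : ℚ⟦X⟧) ^ (2 * k))⁻¹ = geomG (2 * k) + X ^ 2 * geomG 2 := by
    rw [inv_one_sub_pow 2 (by norm_num), inv_one_sub_pow (2 * k) h2k]
    have hsplit : (1 - (X : ℚ⟦X⟧) ^ (2 * k + 2)) =
        (1 - X ^ 2) + X ^ 2 * (1 - X ^ (2 * k)) := by ring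
    rw [hsplit, add_mul, add_mul]
    rw [one_sub_mul_geomG 2 (by norm_num), one_mul]
    have : (X : ℚ⟦X⟧) ^ 2 * (1 - X ^ (2 * k)) * geomG 2 * geomG (2 * k)
        = X ^ 2 * geomG 2 * ((1 - X ^ (2 * k)) * geomG (2 * k)) := by ring
    rw [this, one_sub_mul_geomG (2 * k) h2k, mul_one, add_comm]
  rw [key]
  rw [map_add, coeff_geomG, PowerSeries.coeff_X_pow_mul', coeff_geomG]
  refine ⟨?_, ?_, ?_⟩
  · rintro ⟨hq, hd⟩
    obtain ⟨c, rfl⟩ := hd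
    have hc : 0 < c := Nat.pos_of_ne_zero (by rintro rfl; simp at hq)
    have hkc : 1 ≤ k * c := Nat.mul_pos hk hc
    have h2 : 2 ≤ 2 * k * c := by rw [mul_assoc]; omega
    have hdvd : 2 ∣ 2 * k * c - 2 := ⟨k * c - 1, by rw [mul_assoc]; omega⟩
    rw [if_pos (dvd_mul_right _ _), if_pos h2, if_pos hdvd]; norm_num
  · rintro ⟨he, hnd⟩
    obtain ⟨c, rfl⟩ := he
    rcases Nat.eq_zero_or_pos c with rfl | hc
    · norm_num
    · have hq : 0 < c + c := by omega
      have hnd' : ¬ 2 * k ∣ c + c := fun h => hnd ⟨hq, h⟩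
      rw [if_neg hnd', if_pos (by omega), if_pos ⟨c - 1, by omega⟩]
      norm_num
  · intro ho
    obtain ⟨c, rfl⟩ := ho
    have h1 : ¬ 2 * k ∣ 2 * c + 1 := by
      intro h
      obtain ⟨d, hd⟩ := h
      rw [mul_assoc] at hd
      omega
    rw [if_neg h1]
    by_cases h2 : 2 ≤ 2 * c + 1
    · rw [if_pos h2, if_neg (by intro h; obtain ⟨d, hd⟩ := h; omega)]; norm_num
    · rw [if_neg h2]; norm_num
end

section
/- Let k ≥ 1 and set n = 2k. For every natural number q, the coefficient of t^q in the formal power series (1 - t^{4k}) · (1 - t^2)⁻¹ · (1 - t^{4k-2})⁻¹ ∈ ℚ⟦t⟧ equals: 2 if q is a positive multiple of 2(n-1) = 4k-2; 1 if q is even and q is not a positive multiple of 4k-2; and 0 if q is odd. -/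
open PowerSeries

private def cBetti (k : ℕ) : ℕ → ℚ := fun q =>
  if q % 2 = 0 then (if 0 < q ∧ (4 * k - 2) ∣ q then 2 else 1) else 0

private lemma cB_odd (k m : ℕ) (h : m % 2 = 1) : cBetti k m = 0 := by
  simp only [cBetti]; rw [if_neg (by omega)]

private lemma cB_two (k m : ℕ) (h : m % 2 = 0) (h0 : 0 < m) (hd : (4 * k - 2) ∣ m) :
    cBetti k m = 2 := by
  simp only [cBetti]; rw [if_pos h, if_pos ⟨h0, hd⟩]

private lemma cB_one (k m : ℕ) (h : m % 2 = 0) (hd : ¬(0 < m ∧ (4 * k - 2) ∣ m)) :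
    cBetti k m = 1 := by
  simp only [cBetti]; rw [if_pos h, if_neg hd]

private lemma arith (k : ℕ) (hk : 1 ≤ k) (q : ℕ) :
    cBetti k q - (if 2 ≤ q then cBetti k (q - 2) else 0)
      - (if 4 * k - 2 ≤ q then cBetti k (q - (4 * k - 2)) else 0)
      + (if 4 * k ≤ q then cBetti k (q - 4 * k) else 0)
    = (if q = 0 then 1 else 0) - (if q = 4 * k then 1 else 0) := by
  have hd2 : 2 ≤ 4 * k - 2 := by omega
  rcases Nat.even_or_odd q with hq | hq
  · have hq2 : q % 2 = 0 := Nat.even_iff.mp hq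
    by_cases h0 : q = 0
    · subst h0
      rw [cB_one k 0 (by omega) (by simp), if_neg (by omega : ¬ (2:ℕ) ≤ 0),
        if_neg (by omega : ¬ 4*k-2 ≤ 0), if_neg (by omega : ¬ 4*k ≤ 0),
        if_pos rfl, if_neg (by omega : (0:ℕ) ≠ 4*k)]
      norm_num
    · by_cases hlt : q < 4 * k - 2
      · have v0 : cBetti k q = 1 := cB_one k q hq2 (by
          rintro ⟨hp, hd⟩; exact absurd (Nat.le_of_dvd hp hd) (by omega))
        have t1 : (if 2 ≤ q then cBetti k (q - 2) else 0) = 1 := by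
          rw [if_pos (by omega : 2 ≤ q)]
          exact cB_one k _ (by omega) (by
            rintro ⟨hp, hd⟩; exact absurd (Nat.le_of_dvd hp hd) (by omega))
        rw [v0, t1, if_neg (by omega : ¬ 4*k-2 ≤ q), if_neg (by omega : ¬ 4*k ≤ q),
          if_neg h0, if_neg (by omega : q ≠ 4*k)]
        norm_num
      · by_cases heq : q = 4 * k - 2
        · subst heq
          have v0 : cBetti k (4*k-2) = 2 := cB_two k _ (by omega) (by omega) dvd_rfl
          have t1 : (if 2 ≤ 4*k-2 then cBetti k (4*k-2 - 2) else 0) = 1 := by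
            rw [if_pos hd2]
            exact cB_one k _ (by omega) (by
              rintro ⟨hp, hd⟩; exact absurd (Nat.le_of_dvd hp hd) (by omega))
          have t2 : (if 4*k-2 ≤ 4*k-2 then cBetti k (4*k-2 - (4*k-2)) else 0) = 1 := by
            rw [if_pos le_rfl, Nat.sub_self]
            exact cB_one k 0 (by omega) (by simp)
          rw [v0, t1, t2, if_neg (by omega : ¬ 4*k ≤ 4*k-2), if_neg h0,
            if_neg (by omega : 4*k-2 ≠ 4*k)]
          norm_num
        · by_cases heq4 : q = 4 * k
          · subst heq4
            have t1 : (if 2 ≤ 4*k then cBetti k (4*k - 2) else 0) = 2 := by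
              rw [if_pos (by omega)]
              exact cB_two k _ (by omega) (by omega) dvd_rfl
            have e1 : 4*k - (4*k-2) = 2 := by omega
            have t3 : (if 4*k ≤ 4*k then cBetti k (4*k - 4*k) else 0) = 1 := by
              rw [if_pos le_rfl, Nat.sub_self]
              exact cB_one k 0 (by omega) (by simp)
            rw [t1, t3, if_pos (by omega : 4*k-2 ≤ 4*k), e1,
              if_neg (by omega : 4*k ≠ 0), if_pos rfl]
            by_cases hk1 : k = 1
            · subst hk1
              have v0 : cBetti 1 (4*1) = 2 := cB_two 1 _ (by norm_num) (by norm_num) (by norm_num)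
              have t2 : cBetti 1 2 = 2 := cB_two 1 2 (by norm_num) (by norm_num) (by norm_num)
              rw [v0, t2]; norm_num
            · have hd6 : 6 ≤ 4*k - 2 := by omega
              have v0 : cBetti k (4*k) = 1 := cB_one k _ (by omega) (by
                rintro ⟨hp, hd⟩
                have h2' : (4*k-2) ∣ (4*k - (4*k-2)) := Nat.dvd_sub hd dvd_rfl
                rw [e1] at h2'
                exact absurd (Nat.le_of_dvd (by omega) h2') (by omega))
              have t2 : cBetti k 2 = 1 := cB_one k 2 rfl (by
                rintro ⟨hp, hd⟩; exact absurd (Nat.le_of_dvd (by omega) hd) (by omega))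
              rw [v0, t2]; norm_num
          · -- q ≥ 4k + 2, even
            have hbig : 4 * k + 2 ≤ q := by omega
            have e1 : q - 4*k = q - (4*k-2) - 2 := by omega
            have hdvd1 : (4*k-2) ∣ q ↔ (4*k-2) ∣ (q - (4*k-2)) := by
              constructor
              · intro h; exact Nat.dvd_sub h dvd_rfl
              · intro h
                have hh : q = (q - (4*k-2)) + (4*k-2) := by omega
                rw [hh]; exact Nat.dvd_add h dvd_rfl
            have hdvd2 : (4*k-2) ∣ (q-2) ↔ (4*k-2) ∣ (q - (4*k-2) - 2) := by
              have e2 : q - (4*k-2) - 2 = (q-2) - (4*k-2) := by omega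
              rw [e2]
              constructor
              · intro h; exact Nat.dvd_sub h dvd_rfl
              · intro h
                have hh : q - 2 = ((q-2) - (4*k-2)) + (4*k-2) := by omega
                rw [hh]; exact Nat.dvd_add h dvd_rfl
            rw [if_pos (by omega : 2 ≤ q), if_pos (by omega : 4*k-2 ≤ q),
              if_pos (by omega : 4*k ≤ q), if_neg h0, if_neg heq4, e1]
            have hv : cBetti k q = cBetti k (q - (4*k-2)) := by
              by_cases hA : (4*k-2) ∣ q
              · rw [cB_two k q hq2 (by omega) hA,
                  cB_two k _ (by omega) (by omega) (hdvd1.mp hA)]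
              · rw [cB_one k q hq2 (by tauto),
                  cB_one k _ (by omega) (by rintro ⟨_, h⟩; exact hA (hdvd1.mpr h))]
            have ht : cBetti k (q - 2) = cBetti k (q - (4*k-2) - 2) := by
              by_cases hB : (4*k-2) ∣ (q-2)
              · rw [cB_two k _ (by omega) (by omega) hB,
                  cB_two k _ (by omega) (by omega) (hdvd2.mp hB)]
              · rw [cB_one k _ (by omega) (by tauto),
                  cB_one k _ (by omega) (by rintro ⟨_, h⟩; exact hB (hdvd2.mpr h))]
            rw [hv, ht]; ring
  · have hq2 : q % 2 = 1 := Nat.odd_iff.mp hq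
    have t1 : (if 2 ≤ q then cBetti k (q - 2) else 0) = 0 := by
      split_ifs with h
      · exact cB_odd k _ (by omega)
      · rfl
    have t2 : (if 4*k-2 ≤ q then cBetti k (q - (4*k-2)) else 0) = 0 := by
      split_ifs with h
      · exact cB_odd k _ (by omega)
      · rfl
    have t3 : (if 4*k ≤ q then cBetti k (q - 4*k) else 0) = 0 := by
      split_ifs with h
      · exact cB_odd k _ (by omega)
      · rfl
    rw [cB_odd k q hq2, t1, t2, t3, if_neg (by omega : q ≠ 0),
      if_neg (by omega : q ≠ 4*k)]
    norm_num

private lemma cBetti_key (k : ℕ) (hk : 1 ≤ k) :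
    (PowerSeries.mk (cBetti k)) * ((1 - (X : ℚ⟦X⟧) ^ 2) * (1 - (X : ℚ⟦X⟧) ^ (4 * k - 2)))
      = 1 - (X : ℚ⟦X⟧) ^ (4 * k) := by
  have hXX : (X : ℚ⟦X⟧) ^ 2 * X ^ (4 * k - 2) = X ^ (4 * k) := by
    rw [← pow_add]; congr 1; omega
  have expand : (1 - (X : ℚ⟦X⟧) ^ 2) * (1 - (X : ℚ⟦X⟧) ^ (4 * k - 2))
      = 1 - X ^ 2 - X ^ (4 * k - 2) + X ^ (4 * k) := by
    rw [← hXX]; ring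
  rw [expand]
  ext q
  have hmul : ∀ n : ℕ, (PowerSeries.coeff (R := ℚ) q) (PowerSeries.mk (cBetti k) * X ^ n)
      = if n ≤ q then cBetti k (q - n) else 0 := by
    intro n; rw [PowerSeries.coeff_mul_X_pow']; simp [PowerSeries.coeff_mk]
  calc (PowerSeries.coeff (R := ℚ) q)
        (PowerSeries.mk (cBetti k) * (1 - X ^ 2 - X ^ (4 * k - 2) + X ^ (4 * k)))
      = (PowerSeries.coeff (R := ℚ) q) (PowerSeries.mk (cBetti k)
          - PowerSeries.mk (cBetti k) * X ^ 2
          - PowerSeries.mk (cBetti k) * X ^ (4 * k - 2)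
          + PowerSeries.mk (cBetti k) * X ^ (4 * k)) := by ring_nf
    _ = cBetti k q - (if 2 ≤ q then cBetti k (q - 2) else 0)
          - (if 4 * k - 2 ≤ q then cBetti k (q - (4 * k - 2)) else 0)
          + (if 4 * k ≤ q then cBetti k (q - 4 * k) else 0) := by
        rw [map_add, map_sub, map_sub, hmul 2, hmul (4*k-2), hmul (4*k),
          PowerSeries.coeff_mk]
    _ = (PowerSeries.coeff (R := ℚ) q) (1 - X ^ (4 * k)) := by
        rw [map_sub, PowerSeries.coeff_one, PowerSeries.coeff_X_pow]
        exact arith k hk q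

theorem betti_numbers_even (k : ℕ) (hk : 1 ≤ k) (q : ℕ) :
    ((0 < q ∧ (4 * k - 2) ∣ q) →
      (PowerSeries.coeff (R := ℚ) q)
        ((1 - (X : ℚ⟦X⟧) ^ (4 * k)) * (1 - (X : ℚ⟦X⟧) ^ 2)⁻¹ *
          (1 - (X : ℚ⟦X⟧) ^ (4 * k - 2))⁻¹) = 2) ∧
    ((Even q ∧ ¬(0 < q ∧ (4 * k - 2) ∣ q)) →
      (PowerSeries.coeff (R := ℚ) q)
        ((1 - (X : ℚ⟦X⟧) ^ (4 * k)) * (1 - (X : ℚ⟦X⟧) ^ 2)⁻¹ *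
          (1 - (X : ℚ⟦X⟧) ^ (4 * k - 2))⁻¹) = 1) ∧
    (Odd q →
      (PowerSeries.coeff (R := ℚ) q)
        ((1 - (X : ℚ⟦X⟧) ^ (4 * k)) * (1 - (X : ℚ⟦X⟧) ^ 2)⁻¹ *
          (1 - (X : ℚ⟦X⟧) ^ (4 * k - 2))⁻¹) = 0) := by
  have hc2 : PowerSeries.constantCoeff (R := ℚ) (1 - (X : ℚ⟦X⟧) ^ 2) ≠ 0 := by
    simp [pow_succ]
  have hcd : PowerSeries.constantCoeff (R := ℚ) (1 - (X : ℚ⟦X⟧) ^ (4 * k - 2)) ≠ 0 := by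
    have h : 4 * k - 2 ≠ 0 := by omega
    rw [map_sub, map_one, map_pow, PowerSeries.constantCoeff_X, zero_pow h, sub_zero]
    norm_num
  have key := cBetti_key k hk
  have hF : (1 - (X : ℚ⟦X⟧) ^ (4 * k)) * (1 - (X : ℚ⟦X⟧) ^ 2)⁻¹ *
      (1 - (X : ℚ⟦X⟧) ^ (4 * k - 2))⁻¹ = PowerSeries.mk (cBetti k) := by
    rw [← key]
    have e2 := PowerSeries.mul_inv_cancel _ hc2
    have ed := PowerSeries.mul_inv_cancel _ hcd
    calc PowerSeries.mk (cBetti k) * ((1 - (X:ℚ⟦X⟧)^2) * (1 - X^(4*k-2))) *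
          (1 - X^2)⁻¹ * (1 - X^(4*k-2))⁻¹
        = PowerSeries.mk (cBetti k) * ((1 - (X:ℚ⟦X⟧)^2) * (1-X^2)⁻¹) *
            ((1 - X^(4*k-2)) * (1 - X^(4*k-2))⁻¹) := by ring
      _ = PowerSeries.mk (cBetti k) := by rw [e2, ed]; ring
  rw [hF, PowerSeries.coeff_mk]
  refine ⟨fun h => ?_, fun h => ?_, fun h => ?_⟩
  · have hq2 : q % 2 = 0 := by
      rcases h.2 with ⟨c, rfl⟩
      have he : Even (4 * k - 2) := Nat.even_iff.mpr (by omega)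
      exact Nat.even_iff.mp (he.mul_right c)
    exact cB_two k q hq2 h.1 h.2
  · exact cB_one k q (Nat.even_iff.mp h.1) h.2
  · exact cB_odd k q (Nat.odd_iff.mp h)
end
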